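/- arXiv:1601.02195 — 2 statements merged into one kernel-verified Lean document; each statement's English description precedes it below -/
import Mathlib

section
/- Let ν be a finite Borel measure on ℝⁿ, let ε > 0, and let S : (-ε,ε) → (ℝⁿ → ℝⁿ) be a family of Borel-measurable self-maps of ℝⁿ with S(0) = id. Assume there is a constant C such that ‖S(t)(x) - x‖ ≤ C|t| for all x ∈ ℝⁿ and t ∈ (-ε,ε), and that for ν-almost every x the map t ↦ S(t)(x) is differentiable at t = 0 with derivative h_S(x) := (d/dt)|_{t=0} S(t)(x). Then for every continuously differentiable function φ : ℝⁿ → ℝ which is bounded and has bounded derivative, the function t ↦ ∫ φ(S(t)(x)) ν(dx) (which equals t ↦ ∫ φ d((S(t))_*ν) by the change of variables formula) is differentiable at t = 0 and (d/dt)|_{t=0} ∫ φ(S(t)(x)) ν(dx) = ∫ Dφ(x)(h_S(x)) ν(dx). -/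
open MeasureTheory

/-- Proposition 1 of the paper (finite-dimensional case): if `S` is a family of Borel
self-maps of `ℝⁿ` with `S 0 = id`, `‖S t x - x‖ ≤ C|t|`, and `t ↦ S t x` differentiable at
`0` with derivative `hS x` for `ν`-a.e. `x`, then for every bounded `C¹` test function `φ`
with bounded derivative, `t ↦ ∫ φ(S t x) dν = ∫ φ d((S t)_*ν)` is differentiable at `0`
with derivative `∫ Dφ(x)(hS x) dν`. -/
theorem deriv_along_family_eq_deriv_along_generator
    {n : ℕ} (ν : Measure (EuclideanSpace ℝ (Fin n))) [IsFiniteMeasure ν]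
    (ε : ℝ) (hε : 0 < ε)
    (S : ℝ → EuclideanSpace ℝ (Fin n) → EuclideanSpace ℝ (Fin n))
    (hSmeas : ∀ t ∈ Set.Ioo (-ε) ε, Measurable (S t))
    (hS0 : S 0 = id)
    (hLip : ∃ C : ℝ, ∀ x, ∀ t ∈ Set.Ioo (-ε) ε, ‖S t x - x‖ ≤ C * |t|)
    (hS : EuclideanSpace ℝ (Fin n) → EuclideanSpace ℝ (Fin n))
    (hSdiff : ∀ᵐ x ∂ν, HasDerivAt (fun t => S t x) (hS x) 0) :
    ∀ φ : EuclideanSpace ℝ (Fin n) → ℝ, ContDiff ℝ 1 φ →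
      (∃ C, ∀ x, ‖φ x‖ ≤ C) → (∃ C, ∀ x, ‖fderiv ℝ φ x‖ ≤ C) →
      HasDerivAt (fun t => ∫ x, φ (S t x) ∂ν) (∫ x, fderiv ℝ φ x (hS x) ∂ν) 0 := by
  obtain ⟨C, hC⟩ := hLip
  rintro φ hφ ⟨Cφ, hCφ⟩ ⟨C', hC'⟩
  have hC'0 : 0 ≤ C' := (norm_nonneg _).trans (hC' 0)
  have hφd : Differentiable ℝ φ := hφ.differentiable one_ne_zero
  have hlipφ : ∀ a b : EuclideanSpace ℝ (Fin n), ‖φ a - φ b‖ ≤ C' * ‖a - b‖ := by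
    intro a b
    exact convex_univ.norm_image_sub_le_of_norm_fderiv_le
      (fun x _ => hφd x) (fun x _ => hC' x) (Set.mem_univ b) (Set.mem_univ a)
  have hint : ∀ t ∈ Set.Ioo (-ε) ε, Integrable (fun x => φ (S t x)) ν := by
    intro t ht
    refine Integrable.mono' (integrable_const Cφ)
      (hφ.continuous.measurable.comp (hSmeas t ht)).aestronglyMeasurable ?_
    exact Filter.Eventually.of_forall fun x => hCφ _
  have hintφ : Integrable φ ν := by
    have h0 : (0:ℝ) ∈ Set.Ioo (-ε) ε := ⟨by linarith, hε⟩
    simpa [hS0] using hint 0 h0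
  have hmemIoo : Set.Ioo (-ε) ε ∈ nhdsWithin (0:ℝ) {(0:ℝ)}ᶜ :=
    nhdsWithin_le_nhds (Ioo_mem_nhds (by linarith) hε)
  rw [hasDerivAt_iff_tendsto_slope]
  have key : Filter.Tendsto (fun t => ∫ x, (φ (S t x) - φ x) / t ∂ν)
      (nhdsWithin (0:ℝ) {(0:ℝ)}ᶜ) (nhds (∫ x, fderiv ℝ φ x (hS x) ∂ν)) := by
    apply tendsto_integral_filter_of_dominated_convergence (fun _ => C' * C)
    · filter_upwards [hmemIoo] with t ht
      exact (((hint t ht).sub hintφ).div_const t).aestronglyMeasurable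
    · filter_upwards [hmemIoo, self_mem_nhdsWithin] with t ht ht0
      refine Filter.Eventually.of_forall fun x => ?_
      have ht0' : (0:ℝ) < |t| := abs_pos.2 (Set.mem_compl_singleton_iff.1 ht0)
      have h1 : ‖φ (S t x) - φ x‖ ≤ C' * (C * |t|) :=
        (hlipφ _ _).trans (mul_le_mul_of_nonneg_left (hC x t ht) hC'0)
      rw [Real.norm_eq_abs, abs_div, div_le_iff₀ ht0']
      calc |φ (S t x) - φ x| ≤ C' * (C * |t|) := by
            simpa [Real.norm_eq_abs] using h1
        _ = C' * C * |t| := by ring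
    · exact integrable_const _
    · filter_upwards [hSdiff] with x hx
      have hd : HasDerivAt (fun t => φ (S t x)) (fderiv ℝ φ x (hS x)) 0 := by
        have := (hφd (S 0 x)).hasFDerivAt.comp_hasDerivAt 0 hx
        simpa [hS0, Function.comp_def] using this
      rw [hasDerivAt_iff_tendsto_slope] at hd
      refine hd.congr fun t => ?_
      simp [slope_def_field, hS0]
  refine key.congr' ?_
  filter_upwards [hmemIoo, self_mem_nhdsWithin] with t ht ht0
  have heq : ∫ x, (φ (S t x) - φ x) / t ∂ν
      = ((∫ x, φ (S t x) ∂ν) - ∫ x, φ x ∂ν) / t := by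
    rw [integral_div, integral_sub (hint t ht) hintφ]
  rw [heq, slope_def_field]
  simp [hS0]
end

section
/- Let ν be a finite Borel measure on ℝⁿ, ε > 0, and let S, S₁ : (-ε,ε) → (ℝⁿ → ℝⁿ) be two families of Borel-measurable self-maps of ℝⁿ with S(0) = S₁(0) = id, each satisfying: there is a constant C with ‖S(t)(x) - x‖ ≤ C|t| and ‖S₁(t)(x) - x‖ ≤ C|t| for all x and t, and for ν-almost every x the maps t ↦ S(t)(x) and t ↦ S₁(t)(x) are differentiable at t = 0. If the infinitesimal generators coincide, i.e. (d/dt)|_{t=0} S(t)(x) = (d/dt)|_{t=0} S₁(t)(x) for ν-almost every x, then for every bounded continuously differentiable φ : ℝⁿ → ℝ with bounded derivative, the functions t ↦ ∫ φ(S(t)(x)) ν(dx) and t ↦ ∫ φ(S₁(t)(x)) ν(dx) are both differentiable at t = 0 and have the same derivative there. -/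
open MeasureTheory Filter Topology Set

lemma aux_deriv_family
    {n : ℕ} (ν : Measure (EuclideanSpace ℝ (Fin n))) [IsFiniteMeasure ν]
    (ε : ℝ) (hε : 0 < ε)
    (S : ℝ → EuclideanSpace ℝ (Fin n) → EuclideanSpace ℝ (Fin n))
    (hSmeas : ∀ t ∈ Set.Ioo (-ε) ε, Measurable (S t))
    (hS0 : S 0 = id)
    (C : ℝ) (hLip : ∀ x, ∀ t ∈ Set.Ioo (-ε) ε, ‖S t x - x‖ ≤ C * |t|)
    (hSdiff : ∀ᵐ x ∂ν, ∃ v, HasDerivAt (fun t => S t x) v 0)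
    (φ : EuclideanSpace ℝ (Fin n) → ℝ) (hφ : ContDiff ℝ 1 φ)
    (Cφ : ℝ) (hCφ : ∀ x, ‖φ x‖ ≤ Cφ)
    (C' : ℝ) (hC' : ∀ x, ‖fderiv ℝ φ x‖ ≤ C') :
    HasDerivAt (fun t => ∫ x, φ (S t x) ∂ν)
      (∫ x, fderiv ℝ φ x (deriv (fun t => S t x) 0) ∂ν) 0 := by
  have h0mem : (0:ℝ) ∈ Set.Ioo (-ε) ε := ⟨by linarith, hε⟩
  have hIoo : Set.Ioo (-ε) ε ∈ 𝓝 (0:ℝ) := Ioo_mem_nhds (by linarith) hε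
  have hφc : Continuous φ := hφ.continuous
  -- mean value bound
  have hmv : ∀ a b : EuclideanSpace ℝ (Fin n), ‖φ a - φ b‖ ≤ C' * ‖a - b‖ := by
    intro a b
    exact convex_univ.norm_image_sub_le_of_norm_fderiv_le
      (fun x _ => (hφ.differentiable one_ne_zero).differentiableAt)
      (fun x _ => hC' x) (Set.mem_univ b) (Set.mem_univ a)
  set v : EuclideanSpace ℝ (Fin n) → EuclideanSpace ℝ (Fin n) :=
    fun x => deriv (fun t => S t x) 0 with hv_def
  have hSd : ∀ᵐ x ∂ν, HasDerivAt (fun t => S t x) (v x) 0 := by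
    filter_upwards [hSdiff] with x ⟨w, hw⟩
    simpa [hv_def, hw.deriv] using hw
  -- a.e. measurability of v
  have hv_meas : AEMeasurable v ν := by
    apply aemeasurable_of_tendsto_metrizable_ae (𝓝[≠] (0:ℝ))
      (f := fun t x => if t ∈ Set.Ioo (-ε) ε then t⁻¹ • (S t x - x) else 0)
    · intro t
      by_cases ht : t ∈ Set.Ioo (-ε) ε
      · simp only [ht, if_true]
        exact Measurable.aemeasurable (f := fun x => t⁻¹ • (S t x - x)) (((hSmeas t ht).sub measurable_id).const_smul t⁻¹)
      · simp only [ht, if_false]; exact aemeasurable_const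
    · filter_upwards [hSd] with x hx
      have h1 : Tendsto (fun t => slope (fun t => S t x) 0 t) (𝓝[≠] 0) (𝓝 (v x)) :=
        (hasDerivAt_iff_tendsto_slope).1 hx
      refine h1.congr' ?_
      filter_upwards [mem_nhdsWithin_of_mem_nhds hIoo] with t ht
      simp [slope_def_module, ht, hS0]
  -- the pointwise derivative
  set F' : EuclideanSpace ℝ (Fin n) → ℝ := fun x => fderiv ℝ φ x (v x) with hF'_def
  have hder : ∀ᵐ x ∂ν, HasDerivAt (fun t => φ (S t x)) (F' x) 0 := by
    filter_upwards [hSd] with x hx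
    have : HasFDerivAt φ (fderiv ℝ φ x) (S 0 x) := by
      rw [hS0]; exact ((hφ.differentiable one_ne_zero).differentiableAt).hasFDerivAt
    exact this.comp_hasDerivAt 0 hx
  -- integrability of bounded measurable functions
  have hint : ∀ t ∈ Set.Ioo (-ε) ε, Integrable (fun x => φ (S t x)) ν := by
    intro t ht
    refine ⟨(hφc.measurable.comp (hSmeas t ht)).aestronglyMeasurable, ?_⟩
    exact HasFiniteIntegral.of_bounded (C := Cφ) (Eventually.of_forall fun x => hCφ _)
  have hintφ : Integrable φ ν := by
    have := hint 0 h0mem; simpa [hS0] using this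
  -- dominated convergence for the slopes
  have key : Tendsto (fun t => ∫ x, (φ (S t x) - φ x) / t ∂ν) (𝓝[≠] (0:ℝ))
      (𝓝 (∫ x, F' x ∂ν)) := by
    apply tendsto_integral_filter_of_dominated_convergence (bound := fun _ => C' * C)
    · filter_upwards [mem_nhdsWithin_of_mem_nhds hIoo] with t ht
      exact (((hφc.measurable.comp (hSmeas t ht)).sub
        hφc.measurable).div_const t).aestronglyMeasurable
    · have hmem : ∀ᶠ t in 𝓝[≠] (0:ℝ), t ∈ Set.Ioo (-ε) ε ∧ t ≠ 0 := by
        filter_upwards [mem_nhdsWithin_of_mem_nhds hIoo, eventually_mem_nhdsWithin]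
          with t h1 h2
        exact ⟨h1, h2⟩
      filter_upwards [hmem] with t ⟨ht, ht0⟩
      refine Eventually.of_forall fun x => ?_
      have h1 : ‖φ (S t x) - φ x‖ ≤ C' * (C * |t|) :=
        le_trans (hmv _ _) (by
          have hC'0 : 0 ≤ C' := le_trans (norm_nonneg _) (hC' x)
          exact mul_le_mul_of_nonneg_left (hLip x t ht) hC'0)
      have ht0' : (0:ℝ) < |t| := abs_pos.2 ht0
      rw [norm_div, Real.norm_eq_abs, Real.norm_eq_abs, div_le_iff₀ ht0']
      calc ‖φ (S t x) - φ x‖ ≤ C' * (C * |t|) := h1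
        _ = C' * C * |t| := by ring

    · exact integrable_const _
    · filter_upwards [hder] with x hx
      have h1 : Tendsto (fun t => slope (fun t => φ (S t x)) 0 t) (𝓝[≠] 0) (𝓝 (F' x)) :=
        (hasDerivAt_iff_tendsto_slope).1 hx
      refine h1.congr (fun t => ?_)
      simp [slope_def_field, hS0]
  -- convert to HasDerivAt
  rw [hasDerivAt_iff_tendsto_slope]
  refine key.congr' ?_
  have hmem : ∀ᶠ t in 𝓝[≠] (0:ℝ), t ∈ Set.Ioo (-ε) ε ∧ t ≠ 0 := by
    filter_upwards [mem_nhdsWithin_of_mem_nhds hIoo, eventually_mem_nhdsWithin]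
      with t h1 h2
    exact ⟨h1, h2⟩
  filter_upwards [hmem] with t ⟨ht, ht0⟩
  rw [integral_div]
  rw [integral_sub (hint t ht) hintφ]
  simp [slope_def_field, hS0, div_eq_mul_inv, mul_comm]

/-- Corollary 1 of the paper (finite-dimensional case): two families `S`, `S₁` of Borel
self-maps with `S 0 = S₁ 0 = id`, uniformly Lipschitz in `t` and differentiable at `t = 0`
for `ν`-a.e. `x`, whose infinitesimal generators coincide `ν`-a.e., give rise to functions
`t ↦ ∫ φ(S t x) dν` and `t ↦ ∫ φ(S₁ t x) dν` that are both differentiable at `0` with the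
same derivative. -/
theorem deriv_along_family_depends_only_on_generator
    {n : ℕ} (ν : Measure (EuclideanSpace ℝ (Fin n))) [IsFiniteMeasure ν]
    (ε : ℝ) (hε : 0 < ε)
    (S S₁ : ℝ → EuclideanSpace ℝ (Fin n) → EuclideanSpace ℝ (Fin n))
    (hSmeas : ∀ t ∈ Set.Ioo (-ε) ε, Measurable (S t))
    (hS₁meas : ∀ t ∈ Set.Ioo (-ε) ε, Measurable (S₁ t))
    (hS0 : S 0 = id) (hS₁0 : S₁ 0 = id)
    (hLip : ∃ C : ℝ, ∀ x, ∀ t ∈ Set.Ioo (-ε) ε, ‖S t x - x‖ ≤ C * |t| ∧ ‖S₁ t x - x‖ ≤ C * |t|)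
    (hSdiff : ∀ᵐ x ∂ν, (∃ v, HasDerivAt (fun t => S t x) v 0) ∧
      (∃ v, HasDerivAt (fun t => S₁ t x) v 0))
    (hgen : ∀ᵐ x ∂ν, deriv (fun t => S t x) 0 = deriv (fun t => S₁ t x) 0) :
    ∀ φ : EuclideanSpace ℝ (Fin n) → ℝ, ContDiff ℝ 1 φ →
      (∃ C, ∀ x, ‖φ x‖ ≤ C) → (∃ C, ∀ x, ‖fderiv ℝ φ x‖ ≤ C) →
      ∃ D : ℝ, HasDerivAt (fun t => ∫ x, φ (S t x) ∂ν) D 0 ∧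
        HasDerivAt (fun t => ∫ x, φ (S₁ t x) ∂ν) D 0 := by
  intro φ hφ ⟨Cφ, hCφ⟩ ⟨C', hC'⟩
  obtain ⟨C, hC⟩ := hLip
  have h1 := aux_deriv_family ν ε hε S hSmeas hS0 C (fun x t ht => (hC x t ht).1)
    (hSdiff.mono fun x hx => hx.1) φ hφ Cφ hCφ C' hC'
  have h2 := aux_deriv_family ν ε hε S₁ hS₁meas hS₁0 C (fun x t ht => (hC x t ht).2)
    (hSdiff.mono fun x hx => hx.2) φ hφ Cφ hCφ C' hC'
  refine ⟨_, h1, ?_⟩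
  have heq : (∫ x, fderiv ℝ φ x (deriv (fun t => S t x) 0) ∂ν)
      = ∫ x, fderiv ℝ φ x (deriv (fun t => S₁ t x) 0) ∂ν := by
    apply integral_congr_ae
    filter_upwards [hgen] with x hx
    rw [hx]
  rw [heq]
  exact h2
end
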